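/- Let ι be an index set and let C ⊆ ℝmax^ι be max-plus convex and stable under directed sups and filtered infs. Suppose v ∈ ℝmax^ι is the componentwise supremum of a family {x_ℓ + λ_ℓ}_{ℓ∈L}, where {x_ℓ}_{ℓ∈L} ⊆ C, {λ_ℓ}_{ℓ∈L} ⊆ ℝmax, and sup_ℓ λ_ℓ = 0. Then v ∈ C. (That is, the set of arbitrary max-plus convex combinations of elements of C, intersected with ℝmax^ι, equals C.) -/

import Mathlib

noncomputable section

/-- `ℝmax = ℝ ∪ {-∞}`, the max-plus semifield. -/
abbrev Rmax := WithBot ℝ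

/-- the embedding of `ℝmax = ℝ ∪ {-∞}` into `ℝ̄ = [-∞,+∞]`. -/
def Rmax.toE : Rmax → EReal := WithBot.recBotCoe ⊥ (fun r : ℝ => (r : EReal))

/-- max-plus convexity of a subset of `ℝmax^ι`. -/
def MPConvexI {ι : Type} (C : Set (ι → Rmax)) : Prop :=
  ∀ x ∈ C, ∀ y ∈ C, ∀ α β : Rmax, max α β = 0 →
    (fun i => max (α + x i) (β + y i)) ∈ C

/-- a max-plus subsemimodule of `ℝmax^ι`: contains the bottom vector, stable
under componentwise max and under addition of scalars. -/
def MPSubmoduleI {ι : Type} (V : Set (ι → Rmax)) : Prop :=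
  (fun _ => ⊥) ∈ V ∧ (∀ x ∈ V, ∀ y ∈ V, x ⊔ y ∈ V) ∧
    (∀ x ∈ V, ∀ lam : Rmax, (fun i => x i + lam) ∈ V)

/-- stability under sups of bounded directed subsets. -/
def DirStable {ι : Type} (C : Set (ι → Rmax)) : Prop :=
  ∀ D ⊆ C, D.Nonempty → DirectedOn (· ≤ ·) D → BddAbove D → sSup D ∈ C

/-- stability under infs of filtered subsets. -/
def FiltStable {ι : Type} (C : Set (ι → Rmax)) : Prop :=
  ∀ F ⊆ C, F.Nonempty → DirectedOn (· ≥ ·) F → sInf F ∈ C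

namespace Stmt7Aux

lemma toE_bot : Rmax.toE ⊥ = ⊥ := rfl
lemma toE_coe (r : ℝ) : Rmax.toE (r : Rmax) = (r : EReal) := rfl
lemma toE_zero : Rmax.toE 0 = 0 := rfl

lemma toE_le_iff {a b : Rmax} : Rmax.toE a ≤ Rmax.toE b ↔ a ≤ b := by
  induction a using WithBot.recBotCoe with
  | bot => simp [toE_bot]
  | coe r =>
    induction b using WithBot.recBotCoe with
    | bot => simp [toE_bot, toE_coe]
    | coe s => simp [toE_coe]

lemma sup_add (a b c : Rmax) : (a ⊔ b) + c = (a + c) ⊔ (b + c) := by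
  rcases le_total a b with h | h
  · simp [sup_eq_right.mpr h, sup_eq_right.mpr (add_le_add_left h c)]
  · simp [sup_eq_left.mpr h, sup_eq_left.mpr (add_le_add_left h c)]

lemma coe_add_add_neg (r : ℝ) (x : Rmax) : (↑r + x) + ↑(-r) = x := by
  induction x using WithBot.recBotCoe with
  | bot => simp
  | coe s => rw [← WithBot.coe_add, ← WithBot.coe_add]; norm_num

lemma rmax_le_of_forall {a b : Rmax} (h : ∀ ε : ℝ, 0 < ε → a ≤ b + (ε : Rmax)) : a ≤ b := by
  induction b using WithBot.recBotCoe with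
  | bot =>
    have := h 1 one_pos
    rwa [WithBot.bot_add] at this
  | coe s =>
    induction a using WithBot.recBotCoe with
    | bot => exact bot_le
    | coe t =>
      have ht : ∀ ε : ℝ, 0 < ε → t ≤ s + ε := by
        intro ε hε
        have := h ε hε
        rw [← WithBot.coe_add, WithBot.coe_le_coe] at this
        exact this
      exact WithBot.coe_le_coe.mpr (le_of_forall_pos_le_add ht)

variable {ι : Type}

/-- finite max-plus combination of a list of (vector, coefficient) pairs -/
def combo (ys : List ((ι → Rmax) × Rmax)) : ι → Rmax :=
  fun i => ys.foldr (fun p m => (p.2 + p.1 i) ⊔ m) ⊥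

/-- maximum of coefficients of a list -/
def cmax (ys : List ((ι → Rmax) × Rmax)) : Rmax :=
  ys.foldr (fun p m => p.2 ⊔ m) ⊥

@[simp] lemma combo_nil : combo ([] : List ((ι → Rmax) × Rmax)) = fun _ => ⊥ := rfl
@[simp] lemma combo_cons (p : (ι → Rmax) × Rmax) (t : List ((ι → Rmax) × Rmax)) :
    combo (p :: t) = fun i => (p.2 + p.1 i) ⊔ combo t i := rfl
@[simp] lemma cmax_nil : cmax ([] : List ((ι → Rmax) × Rmax)) = ⊥ := rfl
@[simp] lemma cmax_cons (p : (ι → Rmax) × Rmax) (t : List ((ι → Rmax) × Rmax)) :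
    cmax (p :: t) = p.2 ⊔ cmax t := rfl

lemma combo_append (ys zs : List ((ι → Rmax) × Rmax)) :
    combo (ys ++ zs) = fun i => combo ys i ⊔ combo zs i := by
  induction ys with
  | nil => funext i; simp
  | cons p t ih => funext i; simp [ih, sup_assoc]

lemma cmax_append (ys zs : List ((ι → Rmax) × Rmax)) :
    cmax (ys ++ zs) = cmax ys ⊔ cmax zs := by
  induction ys with
  | nil => simp
  | cons p t ih => simp [ih, sup_assoc]

lemma combo_eq_bot {t : List ((ι → Rmax) × Rmax)} (h : cmax t = ⊥) (i : ι) :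
    combo t i = ⊥ := by
  induction t with
  | nil => rfl
  | cons p s ih =>
    rw [cmax_cons, sup_eq_bot_iff] at h
    simp [h.1, ih h.2]

/-- key lemma: a finite combination, normalized so that its coefficient max is 0,
belongs to C. -/
lemma combo_mem (C : Set (ι → Rmax)) (hconv : MPConvexI C) :
    ∀ ys : List ((ι → Rmax) × Rmax), (∀ p ∈ ys, p.1 ∈ C) →
      ∀ c : ℝ, cmax ys = (c : Rmax) →
        (fun i => combo ys i + ((-c : ℝ) : Rmax)) ∈ C := by
  intro ys
  induction ys with
  | nil => intro _ c hc; simp at hc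
  | cons p t ih =>
    intro hmem c hc
    rw [cmax_cons] at hc
    have hpC : p.1 ∈ C := hmem p List.mem_cons_self
    rcases eq_or_ne (cmax t) ⊥ with hbot | hne
    · -- tail is trivial
      rw [hbot, sup_bot_eq] at hc
      have : (fun i => combo (p :: t) i + ((-c : ℝ) : Rmax)) = p.1 := by
        funext i
        rw [combo_cons]
        simp only []
        rw [combo_eq_bot hbot, sup_bot_eq, hc, coe_add_add_neg]
      rw [this]
      exact hpC
    · obtain ⟨r, hr⟩ := WithBot.ne_bot_iff_exists.mp hne
      have hr' : cmax t = (r : Rmax) := hr.symm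
      have hg : (fun i => combo t i + ((-r : ℝ) : Rmax)) ∈ C :=
        ih (fun q hq => hmem q (List.mem_cons_of_mem p hq)) r hr'
      set g : ι → Rmax := fun i => combo t i + ((-r : ℝ) : Rmax) with hgdef
      set α : Rmax := p.2 + ((-c : ℝ) : Rmax) with hα
      set β : Rmax := ((r - c : ℝ) : Rmax) with hβ
      have hab : max α β = 0 := by
        have h2 : max α β = (p.2 ⊔ (r : Rmax)) + ((-c : ℝ) : Rmax) := by
          rw [sup_add, hα, hβ, ← WithBot.coe_add, sub_eq_add_neg]
        rw [h2, ← hr', hc, ← WithBot.coe_add]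
        norm_num
      have := hconv p.1 hpC g hg α β hab
      have heq : (fun i => max (α + p.1 i) (β + g i)) =
          (fun i => combo (p :: t) i + ((-c : ℝ) : Rmax)) := by
        funext i
        rw [combo_cons]
        simp only []
        rw [sup_add]
        congr 1
        · rw [hα, add_right_comm]
        · rw [hβ, hgdef, add_comm (((r - c : ℝ) : Rmax)) _, add_assoc,
            ← WithBot.coe_add]
          have h3 : (-r) + (r - c) = -c := by ring
          rw [h3]
      rwa [heq] at this

end Stmt7Aux

open Stmt7Aux

theorem stmt7 {ι : Type} (C : Set (ι → Rmax)) (hconv : MPConvexI C)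
    (hdir : DirStable C) (hfilt : FiltStable C)
    (L : Type) (x : L → ι → Rmax) (lam : L → Rmax)
    (hx : ∀ l, x l ∈ C) (hlam : (⨆ l, Rmax.toE (lam l)) = 0)
    (v : ι → Rmax) (hv : ∀ i, Rmax.toE (v i) = ⨆ l, Rmax.toE (x l i + lam l)) :
    v ∈ C := by
  classical
  -- basic consequences of hlam
  have hLne : Nonempty L := by
    by_contra h
    rw [not_nonempty_iff] at h
    rw [iSup_of_empty] at hlam
    exact absurd hlam (by simp)
  have hlam0 : ∀ l, lam l ≤ 0 := by
    intro l
    have : Rmax.toE (lam l) ≤ (0 : EReal) := hlam ▸ le_iSup (fun l => Rmax.toE (lam l)) l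
    rw [← toE_zero] at this
    exact toE_le_iff.mp this
  have happrox : ∀ ε : ℝ, 0 < ε → ∃ l, ((-ε : ℝ) : Rmax) ≤ lam l := by
    intro ε hε
    by_contra h
    push_neg at h
    have : (⨆ l, Rmax.toE (lam l)) ≤ ((-ε : ℝ) : EReal) := by
      apply iSup_le
      intro l
      have := (h l).le
      rw [← toE_le_iff] at this
      exact this
    rw [hlam] at this
    have : (0 : EReal) < 0 := lt_of_le_of_lt this (by exact_mod_cast neg_neg_iff_pos.mpr hε)
    exact lt_irrefl _ this
  have hub : ∀ l i, x l i + lam l ≤ v i := by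
    intro l i
    have : Rmax.toE (x l i + lam l) ≤ Rmax.toE (v i) :=
      (hv i) ▸ le_iSup (fun l => Rmax.toE (x l i + lam l)) l
    exact toE_le_iff.mp this
  -- the directed approximating sets
  set D : ℝ → Set (ι → Rmax) := fun ε =>
    { f | ∃ ys : List ((ι → Rmax) × Rmax),
        (∀ p ∈ ys, (∃ l, p = (x l, lam l)) ∨
          (∃ l, p = (x l, 0) ∧ ((-ε : ℝ) : Rmax) ≤ lam l)) ∧
        cmax ys = 0 ∧ f = combo ys } with hD
  -- upper bound for elements of D ε
  have hboundpt : ∀ ε : ℝ, 0 < ε → ∀ f ∈ D ε, ∀ i, f i ≤ v i + (ε : Rmax) := by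
    intro ε hε f hf i
    obtain ⟨ys, hpred, hc, hfeq⟩ := hf
    subst hfeq
    clear hc
    induction ys with
    | nil => exact bot_le
    | cons p t iht =>
      rw [combo_cons]
      simp only []
      apply sup_le
      · rcases hpred p List.mem_cons_self with ⟨l, hl⟩ | ⟨l, hl, hll⟩
        · subst hl
          calc lam l + x l i = x l i + lam l := add_comm _ _
            _ ≤ v i := hub l i
            _ = v i + 0 := (add_zero _).symm
            _ ≤ v i + (ε : Rmax) := add_le_add_right (by exact_mod_cast hε.le) _
        · subst hl
          simp only [zero_add]
          have h1 : x l i + ((-ε : ℝ) : Rmax) ≤ v i :=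
            le_trans (add_le_add_right hll _) (hub l i)
          calc x l i = x l i + (((-ε : ℝ) : Rmax) + (ε : Rmax)) := by
                rw [← WithBot.coe_add]; norm_num
            _ = (x l i + ((-ε : ℝ) : Rmax)) + (ε : Rmax) := by rw [add_assoc]
            _ ≤ v i + (ε : Rmax) := add_le_add_left h1 _
      · exact iht (fun q hq => hpred q (List.mem_cons_of_mem p hq))
  have hbdd : ∀ ε : ℝ, 0 < ε → BddAbove (D ε) := by
    intro ε hε
    exact ⟨fun i => v i + (ε : Rmax), fun f hf i => hboundpt ε hε f hf i⟩
  have hDsub : ∀ ε : ℝ, D ε ⊆ C := by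
    intro ε f hf
    obtain ⟨ys, hpred, hc, hfeq⟩ := hf
    have hmem : ∀ p ∈ ys, p.1 ∈ C := by
      intro p hp
      rcases hpred p hp with ⟨l, hl⟩ | ⟨l, hl, _⟩ <;> (subst hl; exact hx l)
    have := combo_mem C hconv ys hmem 0 (by rw [hc]; norm_num)
    simp only [neg_zero, WithBot.coe_zero, add_zero] at this
    rwa [hfeq]
  have hDne : ∀ ε : ℝ, 0 < ε → (D ε).Nonempty := by
    intro ε hε
    obtain ⟨l₀, hl₀⟩ := happrox ε hε
    refine ⟨combo [(x l₀, (0 : Rmax))], [(x l₀, (0 : Rmax))], ?_, ?_, rfl⟩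
    · intro p hp
      rw [List.mem_singleton] at hp
      exact Or.inr ⟨l₀, hp, hl₀⟩
    · simp
  have hDdir : ∀ ε : ℝ, DirectedOn (· ≤ ·) (D ε) := by
    intro ε f hf g hg
    obtain ⟨ys, hy1, hy2, hy3⟩ := hf
    obtain ⟨zs, hz1, hz2, hz3⟩ := hg
    refine ⟨combo (ys ++ zs), ⟨ys ++ zs, ?_, ?_, rfl⟩, ?_, ?_⟩
    · intro p hp
      rcases List.mem_append.mp hp with h | h
      · exact hy1 p h
      · exact hz1 p h
    · rw [cmax_append, hy2, hz2]; simp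
    · rw [hy3, combo_append]; intro i; exact le_sup_left
    · rw [hz3, combo_append]; intro i; exact le_sup_right
  -- the family w ε
  set w : ℝ → (ι → Rmax) := fun ε => sSup (D ε) with hw
  have hwC : ∀ ε : ℝ, 0 < ε → w ε ∈ C := by
    intro ε hε
    exact hdir (D ε) (hDsub ε) (hDne ε hε) (hDdir ε) (hbdd ε hε)
  have hwle : ∀ ε : ℝ, 0 < ε → ∀ i, w ε i ≤ v i + (ε : Rmax) := by
    intro ε hε i
    have : w ε ≤ fun i => v i + (ε : Rmax) :=
      csSup_le (hDne ε hε) (fun f hf i => hboundpt ε hε f hf i)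
    exact this i
  have hvw : ∀ ε : ℝ, 0 < ε → v ≤ w ε := by
    intro ε hε
    obtain ⟨l₀, hl₀⟩ := happrox ε hε
    intro i
    rw [← toE_le_iff, hv i]
    apply iSup_le
    intro l
    rw [toE_le_iff]
    set ys : List ((ι → Rmax) × Rmax) := [(x l, lam l), (x l₀, (0 : Rmax))] with hys
    have hmem : combo ys ∈ D ε := by
      refine ⟨ys, ?_, ?_, rfl⟩
      · intro p hp
        rw [hys] at hp
        simp only [List.mem_cons, List.mem_singleton, List.not_mem_nil, or_false] at hp
        rcases hp with hp | hp
        · exact Or.inl ⟨l, hp⟩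
        · exact Or.inr ⟨l₀, hp, hl₀⟩
      · rw [hys]
        simp only [cmax_cons, cmax_nil, sup_bot_eq]
        rw [sup_eq_right.mpr (hlam0 l)]
    have h1 : combo ys ≤ w ε := le_csSup (hbdd ε hε) hmem
    have h2 : x l i + lam l ≤ combo ys i := by
      rw [hys, combo_cons]
      simp only []
      rw [add_comm (lam l) (x l i)]
      exact le_sup_left
    exact le_trans h2 (h1 i)
  -- the filtered family
  set W : Set (ι → Rmax) := { g | ∃ ε : ℝ, 0 < ε ∧ g = w ε } with hW
  have hWsub : W ⊆ C := by
    rintro g ⟨ε, hε, rfl⟩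
    exact hwC ε hε
  have hWne : W.Nonempty := ⟨w 1, 1, one_pos, rfl⟩
  have hwmono : ∀ δ ε : ℝ, 0 < δ → δ ≤ ε → w δ ≤ w ε := by
    intro δ ε hδ hδε
    apply csSup_le_csSup (hbdd ε (lt_of_lt_of_le hδ hδε)) (hDne δ hδ)
    rintro f ⟨ys, hpred, hc, hfeq⟩
    refine ⟨ys, ?_, hc, hfeq⟩
    intro p hp
    rcases hpred p hp with h | ⟨l, hl, hll⟩
    · exact Or.inl h
    · refine Or.inr ⟨l, hl, le_trans ?_ hll⟩
      exact_mod_cast neg_le_neg hδε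
  have hWfilt : DirectedOn (· ≥ ·) W := by
    rintro f ⟨ε, hε, rfl⟩ g ⟨ε', hε', rfl⟩
    refine ⟨w (min ε ε'), ⟨min ε ε', lt_min hε hε', rfl⟩, ?_, ?_⟩
    · exact hwmono _ _ (lt_min hε hε') (min_le_left _ _)
    · exact hwmono _ _ (lt_min hε hε') (min_le_right _ _)
  have hinf : sInf W ∈ C := hfilt W hWsub hWne hWfilt
  have hveq : v = sInf W := by
    apply le_antisymm
    · apply le_csInf hWne
      rintro g ⟨ε, hε, rfl⟩
      exact hvw ε hε
    · intro i
      apply rmax_le_of_forall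
      intro ε hε
      have h1 : sInf W ≤ w ε := csInf_le (OrderBot.bddBelow W) ⟨ε, hε, rfl⟩
      exact le_trans (h1 i) (hwle ε hε i)
  rwa [hveq]

end
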